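/- Consider the star-graph replicator system dp_i/dt = p_i(1 − p_i)((w+1)z − w) for i = 1,…,n and dz/dt = z(1 − z)((w+1)·Σ_{i=1}^n p_i − n·w), with all coordinates in (0,1). Then for all leaves i, j, the quantity [ln p_i(t) − ln(1 − p_i(t))] − [ln p_j(t) − ln(1 − p_j(t))] is constant along every solution (independent of t). -/

import Mathlib

open Filter Topology Set

lemma logit_deriv {n : ℕ} {w : ℝ} {p : ℝ → Fin n → ℝ} {z : ℝ → ℝ}
    (hmem : ∀ t : ℝ, (∀ i, p t i ∈ Ioo (0:ℝ) 1) ∧ z t ∈ Ioo (0:ℝ) 1)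
    (hp : ∀ (t : ℝ) (i : Fin n),
      HasDerivAt (fun τ => p τ i) (p t i * (1 - p t i) * ((w + 1) * z t - w)) t)
    (i : Fin n) (t : ℝ) :
    HasDerivAt (fun τ => Real.log (p τ i) - Real.log (1 - p τ i))
      ((w + 1) * z t - w) t := by
  obtain ⟨h1, _⟩ := hmem t
  obtain ⟨hp0, hp1⟩ := h1 i
  have hne : p t i ≠ 0 := ne_of_gt hp0
  have hne1 : 1 - p t i ≠ 0 := ne_of_gt (by linarith)
  have d1 : HasDerivAt (fun τ => Real.log (p τ i))
      (p t i * (1 - p t i) * ((w + 1) * z t - w) / p t i) t := (hp t i).log hne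
  have d2' : HasDerivAt (fun τ => 1 - p τ i)
      (-(p t i * (1 - p t i) * ((w + 1) * z t - w))) t :=
    (hp t i).const_sub 1
  have d2 : HasDerivAt (fun τ => Real.log (1 - p τ i))
      (-(p t i * (1 - p t i) * ((w + 1) * z t - w)) / (1 - p t i)) t := d2'.log hne1
  have : HasDerivAt (fun τ => Real.log (p τ i) - Real.log (1 - p τ i)) _ t := d1.sub d2
  convert this using 1
  field_simp
  ring

theorem star_replicator_invariant (n : ℕ) (w : ℝ) (hw : 1 ≤ w)
    (p : ℝ → Fin n → ℝ) (z : ℝ → ℝ)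
    (hmem : ∀ t : ℝ, (∀ i, p t i ∈ Ioo (0:ℝ) 1) ∧ z t ∈ Ioo (0:ℝ) 1)
    (hp : ∀ (t : ℝ) (i : Fin n),
      HasDerivAt (fun τ => p τ i) (p t i * (1 - p t i) * ((w + 1) * z t - w)) t)
    (hz : ∀ t : ℝ,
      HasDerivAt z (z t * (1 - z t) * ((w + 1) * (∑ i, p t i) - n * w)) t) :
    ∀ (i j : Fin n) (t₁ t₂ : ℝ),
      (Real.log (p t₁ i) - Real.log (1 - p t₁ i))
        - (Real.log (p t₁ j) - Real.log (1 - p t₁ j)) =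
      (Real.log (p t₂ i) - Real.log (1 - p t₂ i))
        - (Real.log (p t₂ j) - Real.log (1 - p t₂ j)) := by
  intro i j t₁ t₂
  set f : ℝ → ℝ := fun t =>
    (Real.log (p t i) - Real.log (1 - p t i))
      - (Real.log (p t j) - Real.log (1 - p t j)) with hf
  have hd : ∀ t, HasDerivAt f 0 t := by
    intro t
    have := (logit_deriv hmem hp i t).sub (logit_deriv hmem hp j t)
    rw [sub_self] at this
    exact this
  have : f t₁ = f t₂ := by
    have h := is_const_of_deriv_eq_zero (f := f)
      (fun t => (hd t).differentiableAt) (fun t => (hd t).deriv) t₁ t₂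
    exact h
  simpa [hf] using this
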